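/- For a reversible chemical reaction network with mass-action kinetics, if x̃ ∈ ℝ_{>0}^n is a complex-balanced state, i.e., B(j⁺(x̃) − j⁻(x̃)) = 0, then the set of all positive complex-balanced states coincides with the equilibrium manifold through x̃: {x ∈ ℝ_{>0}^n : B(j⁺(x) − j⁻(x)) = 0} = {x ∈ ℝ_{>0}^n : Sᵀ(ln x − ln x̃) = 0}. -/

import Mathlib

open Matrix

/-- One-way mass-action flux: j_e(x) = k_e ∏ᵢ xᵢ^{(ΓB)_{ie}}. -/
noncomputable def oneWayFlux {n m r : ℕ} (Γ : Matrix (Fin n) (Fin m) ℕ)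
    (B : Matrix (Fin m) (Fin r) ℕ) (k : Fin r → ℝ) (x : Fin n → ℝ) : Fin r → ℝ :=
  fun e => k e * ∏ i, x i ^ ((Γ * B) i e)

private lemma log_ineq {a b : ℝ} (ha : 0 < a) (hb : 0 < b) :
    a - b ≤ a * (Real.log a - Real.log b) := by
  have h := Real.log_le_sub_one_of_pos (div_pos hb ha)
  rw [Real.log_div hb.ne' ha.ne'] at h
  have h2 : a * (b / a) = b := by field_simp
  nlinarith [mul_le_mul_of_nonneg_left h ha.le]

private lemma log_ineq_strict {a b : ℝ} (ha : 0 < a) (hb : 0 < b) (hab : a ≠ b) :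
    a - b < a * (Real.log a - Real.log b) := by
  have hne : b / a ≠ 1 := by
    intro h
    exact hab ((div_eq_one_iff_eq ha.ne').mp h).symm
  have h := Real.log_lt_sub_one_of_pos (div_pos hb ha) hne
  rw [Real.log_div hb.ne' ha.ne'] at h
  have h2 : a * (b / a) = b := by field_simp
  nlinarith [mul_lt_mul_of_pos_left h ha]

theorem complex_balanced_states_equal_equilibrium_manifold
    {n m r : ℕ}
    (Γ : Matrix (Fin n) (Fin m) ℕ)
    (Bp Bm : Matrix (Fin m) (Fin r) ℕ)
    (hBp01 : ∀ l e, Bp l e = 0 ∨ Bp l e = 1)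
    (hBm01 : ∀ l e, Bm l e = 0 ∨ Bm l e = 1)
    (hBpcol : ∀ e, ∃! l, Bp l e = 1)
    (hBmcol : ∀ e, ∃! l, Bm l e = 1)
    (kp km : Fin r → ℝ) (hkp : ∀ e, 0 < kp e) (hkm : ∀ e, 0 < km e)
    (xt : Fin n → ℝ) (hxt : ∀ i, 0 < xt i)
    (hCB : (Bp.map (Nat.cast : ℕ → ℝ) - Bm.map (Nat.cast : ℕ → ℝ)) *ᵥ
        (oneWayFlux Γ Bp kp xt - oneWayFlux Γ Bm km xt) = 0) :
    {x : Fin n → ℝ | (∀ i, 0 < x i) ∧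
        (Bp.map (Nat.cast : ℕ → ℝ) - Bm.map (Nat.cast : ℕ → ℝ)) *ᵥ
          (oneWayFlux Γ Bp kp x - oneWayFlux Γ Bm km x) = 0} =
      {x : Fin n → ℝ | (∀ i, 0 < x i) ∧
        ((Γ * Bp).map (Nat.cast : ℕ → ℝ) - (Γ * Bm).map (Nat.cast : ℕ → ℝ))ᵀ *ᵥ
          (fun i => Real.log (x i) - Real.log (xt i)) = 0} := by
  classical
  -- head and tail maps
  choose hd hd1 hd2 using hBpcol
  choose tl tl1 tl2 using hBmcol
  have hBpe : ∀ l e, (Bp l e : ℝ) = if l = hd e then 1 else 0 := by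
    intro l e
    by_cases h : l = hd e
    · subst h; rw [hd1 e]; simp
    · rcases hBp01 l e with h0 | h1
      · simp [h, h0]
      · exact absurd (hd2 e l h1) h
  have hBme : ∀ l e, (Bm l e : ℝ) = if l = tl e then 1 else 0 := by
    intro l e
    by_cases h : l = tl e
    · subst h; rw [tl1 e]; simp
    · rcases hBm01 l e with h0 | h1
      · simp [h, h0]
      · exact absurd (tl2 e l h1) h
  -- product matrix entries
  have hGBp : ∀ i e, (Γ * Bp) i e = Γ i (hd e) := by
    intro i e
    have : ∀ l, Γ i l * Bp l e = if l = hd e then Γ i (hd e) else 0 := by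
      intro l
      by_cases h : l = hd e
      · subst h; rw [hd1 e, mul_one]; simp
      · rcases hBp01 l e with h0 | h1
        · simp [h, h0]
        · exact absurd (hd2 e l h1) h
    rw [Matrix.mul_apply, Finset.sum_congr rfl fun l _ => this l, Finset.sum_ite_eq']
    simp
  have hGBm : ∀ i e, (Γ * Bm) i e = Γ i (tl e) := by
    intro i e
    have : ∀ l, Γ i l * Bm l e = if l = tl e then Γ i (tl e) else 0 := by
      intro l
      by_cases h : l = tl e
      · subst h; rw [tl1 e, mul_one]; simp
      · rcases hBm01 l e with h0 | h1
        · simp [h, h0]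
        · exact absurd (tl2 e l h1) h
    rw [Matrix.mul_apply, Finset.sum_congr rfl fun l _ => this l, Finset.sum_ite_eq']
    simp
  -- the function c
  set c : (Fin n → ℝ) → Fin m → ℝ := fun x l => ∏ i, (x i / xt i) ^ Γ i l with hcdef
  have hcpos : ∀ (x : Fin n → ℝ), (∀ i, 0 < x i) → ∀ l, 0 < c x l := by
    intro x hx l
    exact Finset.prod_pos fun i _ => pow_pos (div_pos (hx i) (hxt i)) _
  have hclog : ∀ (x : Fin n → ℝ), (∀ i, 0 < x i) → ∀ l,
      Real.log (c x l) = ∑ i, (Γ i l : ℝ) * (Real.log (x i) - Real.log (xt i)) := by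
    intro x hx l
    rw [hcdef]
    rw [Real.log_prod fun i _ => (pow_pos (div_pos (hx i) (hxt i)) _).ne']
    refine Finset.sum_congr rfl fun i _ => ?_
    rw [Real.log_pow, Real.log_div (hx i).ne' (hxt i).ne']
  -- flux factorization
  have hfluxp : ∀ (x : Fin n → ℝ), (∀ i, 0 < x i) → ∀ e,
      oneWayFlux Γ Bp kp x e = oneWayFlux Γ Bp kp xt e * c x (hd e) := by
    intro x hx e
    simp only [oneWayFlux, hGBp, hcdef]
    rw [mul_assoc, ← Finset.prod_mul_distrib]
    congr 1
    refine Finset.prod_congr rfl fun i _ => ?_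
    rw [← mul_pow, mul_div_cancel₀ _ (hxt i).ne']
  have hfluxm : ∀ (x : Fin n → ℝ), (∀ i, 0 < x i) → ∀ e,
      oneWayFlux Γ Bm km x e = oneWayFlux Γ Bm km xt e * c x (tl e) := by
    intro x hx e
    simp only [oneWayFlux, hGBm, hcdef]
    rw [mul_assoc, ← Finset.prod_mul_distrib]
    congr 1
    refine Finset.prod_congr rfl fun i _ => ?_
    rw [← mul_pow, mul_div_cancel₀ _ (hxt i).ne']
  set F : Fin r → ℝ := oneWayFlux Γ Bp kp xt with hFdef
  set G : Fin r → ℝ := oneWayFlux Γ Bm km xt with hGdef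
  have hFpos : ∀ e, 0 < F e :=
    fun e => mul_pos (hkp e) (Finset.prod_pos fun i _ => pow_pos (hxt i) _)
  have hGpos : ∀ e, 0 < G e :=
    fun e => mul_pos (hkm e) (Finset.prod_pos fun i _ => pow_pos (hxt i) _)
  -- CB condition as node sums
  have hCBnode : ∀ (x : Fin n → ℝ),
      ((Bp.map (Nat.cast : ℕ → ℝ) - Bm.map (Nat.cast : ℕ → ℝ)) *ᵥ
        (oneWayFlux Γ Bp kp x - oneWayFlux Γ Bm km x) = 0) ↔
      (∀ l, ∑ e, ((Bp l e : ℝ) - (Bm l e : ℝ)) *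
        (oneWayFlux Γ Bp kp x e - oneWayFlux Γ Bm km x e) = 0) := by
    intro x
    constructor
    · intro h l
      have := congrFun h l
      simpa [Matrix.mulVec, dotProduct, Matrix.sub_apply, Matrix.map_apply] using this
    · intro h
      funext l
      simpa [Matrix.mulVec, dotProduct, Matrix.sub_apply, Matrix.map_apply] using h l
  -- generic swap lemma
  have sumδ : ∀ (e : Fin r) (g : Fin m → ℝ),
      ∑ l, ((Bp l e : ℝ) - (Bm l e : ℝ)) * g l = g (hd e) - g (tl e) := by
    intro e g
    have : ∀ l, ((Bp l e : ℝ) - (Bm l e : ℝ)) * g l =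
        (if l = hd e then g l else 0) - (if l = tl e then g l else 0) := by
      intro l
      rw [hBpe, hBme]
      by_cases h1 : l = hd e <;> by_cases h2 : l = tl e
      · have h3 : hd e = tl e := h1.symm.trans h2
        simp [h1, ← h3]
      · have h3 : hd e ≠ tl e := fun hh => h2 (h1.trans hh)
        simp [h1, h3]
      · have h3 : tl e ≠ hd e := fun hh => h1 (h2.trans hh)
        simp [h2, h3]
      · simp [h1, h2]
    rw [Finset.sum_congr rfl fun l _ => this l, Finset.sum_sub_distrib,
      Finset.sum_ite_eq', Finset.sum_ite_eq']
    simp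
  have nodeE : ∀ (w : Fin r → ℝ),
      (∀ l, ∑ e, ((Bp l e : ℝ) - (Bm l e : ℝ)) * w e = 0) →
      ∀ g : Fin m → ℝ, ∑ e, w e * (g (hd e) - g (tl e)) = 0 := by
    intro w hw g
    have key : ∑ e, w e * (g (hd e) - g (tl e)) =
        ∑ l, g l * ∑ e, ((Bp l e : ℝ) - (Bm l e : ℝ)) * w e := by
      have h1 : ∀ e, w e * (g (hd e) - g (tl e)) =
          ∑ l, g l * (((Bp l e : ℝ) - (Bm l e : ℝ)) * w e) := by
        intro e
        rw [← sumδ e g, Finset.mul_sum]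
        exact Finset.sum_congr rfl fun l _ => by ring
      rw [Finset.sum_congr rfl fun e _ => h1 e, Finset.sum_comm]
      exact Finset.sum_congr rfl fun l _ => (Finset.mul_sum _ _ _).symm
    rw [key]
    simp [hw]
  -- CB at xt as node sums
  have hCBt : ∀ l, ∑ e, ((Bp l e : ℝ) - (Bm l e : ℝ)) * (F e - G e) = 0 := by
    intro l
    have := (hCBnode xt).mp hCB l
    simpa [hFdef, hGdef] using this
  -- equilibrium condition characterization
  have hEqChar : ∀ (x : Fin n → ℝ), (∀ i, 0 < x i) →
      ((((Γ * Bp).map (Nat.cast : ℕ → ℝ) - (Γ * Bm).map (Nat.cast : ℕ → ℝ))ᵀ *ᵥ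
          (fun i => Real.log (x i) - Real.log (xt i)) = 0) ↔
        ∀ e, c x (hd e) = c x (tl e)) := by
    intro x hx
    have hcomp : ∀ e, (((Γ * Bp).map (Nat.cast : ℕ → ℝ) - (Γ * Bm).map (Nat.cast : ℕ → ℝ))ᵀ *ᵥ
        (fun i => Real.log (x i) - Real.log (xt i))) e =
        Real.log (c x (hd e)) - Real.log (c x (tl e)) := by
      intro e
      rw [hclog x hx, hclog x hx]
      simp only [Matrix.mulVec, dotProduct, Matrix.transpose_apply, Matrix.sub_apply,
        Matrix.map_apply, hGBp, hGBm]
      rw [← Finset.sum_sub_distrib]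
      exact Finset.sum_congr rfl fun i _ => by ring
    constructor
    · intro h e
      have h0 := congrFun h e
      rw [hcomp e] at h0
      have := sub_eq_zero.mp (by simpa using h0)
      have := Real.log_injOn_pos (Set.mem_Ioi.mpr (hcpos x hx (hd e)))
        (Set.mem_Ioi.mpr (hcpos x hx (tl e))) this
      exact this
    · intro h
      funext e
      rw [hcomp e, h e]
      simp
  -- main set equality
  ext x
  simp only [Set.mem_setOf_eq]
  constructor
  · rintro ⟨hx, hbal⟩
    refine ⟨hx, (hEqChar x hx).mpr ?_⟩
    -- hard direction
    set a : Fin r → ℝ := fun e => c x (hd e) with hadef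
    set b : Fin r → ℝ := fun e => c x (tl e) with hbdef
    have hapos : ∀ e, 0 < a e := fun e => hcpos x hx _
    have hbpos : ∀ e, 0 < b e := fun e => hcpos x hx _
    have hnode : ∀ l, ∑ e, ((Bp l e : ℝ) - (Bm l e : ℝ)) * (F e * a e - G e * b e) = 0 := by
      intro l
      have := (hCBnode x).mp hbal l
      refine Eq.trans (Finset.sum_congr rfl fun e _ => ?_) this
      rw [hfluxp x hx e, hfluxm x hx e]
    have S1 : ∑ e, (F e * a e - G e * b e) * (Real.log (a e) - Real.log (b e)) = 0 :=
      nodeE _ hnode (fun l => Real.log (c x l))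
    have S2 : ∑ e, (F e - G e) * (a e - b e) = 0 :=
      nodeE _ hCBt (fun l => c x l)
    -- termwise nonnegativity
    have hT : ∀ e, 0 ≤ (F e * a e - G e * b e) * (Real.log (a e) - Real.log (b e))
        - (F e - G e) * (a e - b e) := by
      intro e
      have h1 : a e - b e ≤ a e * (Real.log (a e) - Real.log (b e)) :=
        log_ineq (hapos e) (hbpos e)
      have h2 : b e - a e ≤ b e * (Real.log (b e) - Real.log (a e)) :=
        log_ineq (hbpos e) (hapos e)
      nlinarith [hFpos e, hGpos e]
    have hTzero : ∀ e, (F e * a e - G e * b e) * (Real.log (a e) - Real.log (b e))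
        - (F e - G e) * (a e - b e) = 0 := by
      have hsum : ∑ e, ((F e * a e - G e * b e) * (Real.log (a e) - Real.log (b e))
          - (F e - G e) * (a e - b e)) = 0 := by
        rw [Finset.sum_sub_distrib, S1, S2, sub_zero]
      intro e
      exact (Finset.sum_eq_zero_iff_of_nonneg fun e _ => hT e).mp hsum e (Finset.mem_univ e)
    intro e
    by_contra hne
    have h1 : a e - b e < a e * (Real.log (a e) - Real.log (b e)) :=
      log_ineq_strict (hapos e) (hbpos e) hne
    have h2 : b e - a e ≤ b e * (Real.log (b e) - Real.log (a e)) :=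
      log_ineq (hbpos e) (hapos e)
    have := hTzero e
    nlinarith [hFpos e, hGpos e]
  · rintro ⟨hx, heq⟩
    refine ⟨hx, (hCBnode x).mpr ?_⟩
    have hceq : ∀ e, c x (hd e) = c x (tl e) := (hEqChar x hx).mp heq
    intro l
    have key : ∀ e, ((Bp l e : ℝ) - (Bm l e : ℝ)) *
        (oneWayFlux Γ Bp kp x e - oneWayFlux Γ Bm km x e) =
        c x l * (((Bp l e : ℝ) - (Bm l e : ℝ)) * (F e - G e)) := by
      intro e
      rw [hfluxp x hx e, hfluxm x hx e, hBpe, hBme]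
      by_cases h1 : l = hd e <;> by_cases h2 : l = tl e
      · have h3 : hd e = tl e := h1.symm.trans h2
        simp [h1, ← h3]
      · have h3 : hd e ≠ tl e := fun hh => h2 (h1.trans hh)
        subst h1
        rw [← hceq e]
        simp [h3]
        ring
      · have h3 : tl e ≠ hd e := fun hh => h1 (h2.trans hh)
        subst h2
        rw [hceq e]
        simp [h3]
        ring
      · simp [h1, h2]
    rw [Finset.sum_congr rfl fun e _ => key e, ← Finset.mul_sum, hCBt l, mul_zero]
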